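/- Let G be a game graph with n nodes and priorities up to d, let τ be a positional winning strategy for Even in G, let G_τ be the strategy subgraph of G with respect to τ, and let V_τ be the set of nodes of G_τ reachable from the starting node v_I. Then every cycle of G_τ whose nodes all lie in V_τ has even maximal edge priority; in particular, within any strongly connected subset of V_τ, no edge of G_τ whose priority is the maximum priority of that subset can have odd priority. -/

import Mathlib

namespace PGSep

/-- Letters of the alphabet `Σ_{n,d}`: triples (source node, priority, target node). -/
abbrev Letter : Type := ℕ × ℕ × ℕ

/-- The priority component of a letter. -/
def prio (e : Letter) : ℕ := e.2.1

/-- Membership in the alphabet `Σ_{n,d} = {1,…,n} × {1,…,d} × {1,…,n}`. -/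
def InAlph (n d : ℕ) (e : Letter) : Prop :=
  1 ≤ e.1 ∧ e.1 ≤ n ∧ 1 ≤ e.2.1 ∧ e.2.1 ≤ d ∧ 1 ≤ e.2.2 ∧ e.2.2 ≤ n

/-- Infinite words over the alphabet. -/
abbrev Word : Type := ℕ → Letter

/-- `p` occurs infinitely often among the values of `f`. -/
def InfOft (f : ℕ → ℕ) (p : ℕ) : Prop := ∀ N, ∃ k, N ≤ k ∧ f k = p

/-- The largest value occurring infinitely often in `f` exists and is even. -/
def MaxInfOftEven (f : ℕ → ℕ) : Prop :=
  ∃ p, Even p ∧ InfOft f p ∧ ∀ q, InfOft f q → q ≤ p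

/-- The largest value occurring infinitely often in `f` exists and is odd. -/
def MaxInfOftOdd (f : ℕ → ℕ) : Prop :=
  ∃ p, Odd p ∧ InfOft f p ∧ ∀ q, InfOft f q → q ≤ p

/-- `LimsupEven_{n,d}`: the largest priority occurring infinitely often is even. -/
def LimsupEven (w : Word) : Prop := MaxInfOftEven fun k => prio (w k)

/-- `LimsupOdd_{n,d}`: the largest priority occurring infinitely often is odd. -/
def LimsupOdd (w : Word) : Prop := MaxInfOftOdd fun k => prio (w k)

/-- An infinite sequence of triples is a path in the edge set `E`. -/
def IsPathSeq {V : Type*} (E : Set (V × ℕ × V)) (w : ℕ → V × ℕ × V) : Prop :=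
  ∀ k, w k ∈ E ∧ (w k).2.2 = (w (k + 1)).1

/-- A game graph with `n` nodes (the set {1,…,n}) and priorities up to `d`. -/
structure GameGraph (n d : ℕ) where
  /-- nodes owned by Even (V_□) -/
  evenN : Set ℕ
  /-- nodes owned by Odd (V_△) -/
  oddN : Set ℕ
  /-- the starting node -/
  start : ℕ
  /-- the set of edges (a subset of the alphabet) -/
  edges : Set Letter
  union_eq : evenN ∪ oddN = Set.Icc 1 n
  disj : Disjoint evenN oddN
  start_mem : start ∈ Set.Icc 1 n
  edges_alph : ∀ e ∈ edges, InAlph n d e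
  total : ∀ v ∈ Set.Icc (1 : ℕ) n, ∃ e ∈ edges, e.1 = v

/-- A play in a game graph: an infinite path starting at the starting node,
identified with the word listing its consecutive edges. -/
def IsPlay {n d : ℕ} (G : GameGraph n d) (w : Word) : Prop :=
  (w 0).1 = G.start ∧ IsPathSeq G.edges w

/-- A positional strategy for Even: one outgoing edge for each node of `V_□`. -/
structure EPosStrat {n d : ℕ} (G : GameGraph n d) where
  choice : ℕ → Letter
  mem : ∀ v ∈ G.evenN, choice v ∈ G.edges ∧ (choice v).1 = v

/-- A positional strategy for Odd: one outgoing edge for each node of `V_△`. -/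
structure OPosStrat {n d : ℕ} (G : GameGraph n d) where
  choice : ℕ → Letter
  mem : ∀ v ∈ G.oddN, choice v ∈ G.edges ∧ (choice v).1 = v

/-- A play arises from a positional strategy of Even. -/
def ArisesE {n d : ℕ} {G : GameGraph n d} (τ : EPosStrat G) (w : Word) : Prop :=
  IsPlay G w ∧ ∀ k, (w k).1 ∈ G.evenN → w k = τ.choice (w k).1

/-- A play arises from a positional strategy of Odd. -/
def ArisesO {n d : ℕ} {G : GameGraph n d} (τ : OPosStrat G) (w : Word) : Prop :=
  IsPlay G w ∧ ∀ k, (w k).1 ∈ G.oddN → w k = τ.choice (w k).1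

/-- A positional strategy for Even is winning: every arising play is won by Even. -/
def EWinningPos {n d : ℕ} {G : GameGraph n d} (τ : EPosStrat G) : Prop :=
  ∀ w, ArisesE τ w → LimsupEven w

/-- A positional strategy for Odd is winning: every arising play is won by Odd
(i.e. not won by Even). -/
def OWinningPos {n d : ℕ} {G : GameGraph n d} (τ : OPosStrat G) : Prop :=
  ∀ w, ArisesO τ w → ¬ LimsupEven w

/-- `PosEven_{n,d}`: plays arising from positional winning strategies for Even. -/
def PosEven (n d : ℕ) : Set Word :=
  {w | ∃ G : GameGraph n d, ∃ τ : EPosStrat G, EWinningPos τ ∧ ArisesE τ w}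

/-- `PosOdd_{n,d}`: plays arising from positional winning strategies for Odd. -/
def PosOdd (n d : ℕ) : Set Word :=
  {w | ∃ G : GameGraph n d, ∃ τ : OPosStrat G, OWinningPos τ ∧ ArisesO τ w}

/-- A nondeterministic automaton reading letters, with state space `Q`. -/
structure Automaton (Q : Type*) where
  init : Q
  trans : Set (Q × Letter × ℕ × Q)

/-- Transitions: (source state, letter, emitted priority, target state). -/
abbrev Trans (Q : Type*) : Type _ := Q × Letter × ℕ × Q

def tSrc {Q : Type*} (t : Trans Q) : Q := t.1
def tLetter {Q : Type*} (t : Trans Q) : Letter := t.2.1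
def tPrio {Q : Type*} (t : Trans Q) : ℕ := t.2.2.1
def tTgt {Q : Type*} (t : Trans Q) : Q := t.2.2.2

/-- `A` is a (total) nondeterministic parity automaton over `Σ_{n,d}` with
transition priorities in `{1,…,d'}`. -/
def IsParityAutomaton (n d d' : ℕ) {Q : Type*} (A : Automaton Q) : Prop :=
  (∀ t ∈ A.trans, InAlph n d (tLetter t) ∧ 1 ≤ tPrio t ∧ tPrio t ≤ d') ∧
  (∀ (s : Q) (e : Letter), InAlph n d e → ∃ p s', (s, e, p, s') ∈ A.trans)

/-- A run of the automaton: an infinite path of transitions starting at `init`. -/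
def IsRun {Q : Type*} (A : Automaton Q) (ρ : ℕ → Trans Q) : Prop :=
  tSrc (ρ 0) = A.init ∧ ∀ k, ρ k ∈ A.trans ∧ tTgt (ρ k) = tSrc (ρ (k + 1))

/-- The run `ρ` reads the word `w`. -/
def Reads {Q : Type*} (ρ : ℕ → Trans Q) (w : Word) : Prop := ∀ k, tLetter (ρ k) = w k

/-- A run is accepting: the largest priority labelling infinitely many
of its transitions is even. -/
def Accepting {Q : Type*} (ρ : ℕ → Trans Q) : Prop := MaxInfOftEven fun k => tPrio (ρ k)

/-- The language of the automaton. -/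
def Lang {Q : Type*} (A : Automaton Q) : Set Word :=
  {w | ∃ ρ, IsRun A ρ ∧ Reads ρ w ∧ Accepting ρ}

/-- A transition strategy for `A`, resolving nondeterminism based on the word read
so far, the current state, and the next letter. -/
structure TransStrat (n d : ℕ) {Q : Type*} (A : Automaton Q) where
  app : List Letter → Q → Letter → Trans Q
  valid : ∀ w s e, InAlph n d e →
    app w s e ∈ A.trans ∧ tSrc (app w s e) = s ∧ tLetter (app w s e) = e

/-- The state reached after reading the first `k` letters of `w` following `σ`. -/
def stateAt {n d : ℕ} {Q : Type*} (A : Automaton Q) (σ : TransStrat n d A) (w : Word) :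
    ℕ → Q
  | 0 => A.init
  | k + 1 => tTgt (σ.app ((List.range k).map w) (stateAt A σ w k) (w k))

/-- The run obtained by following the transition strategy `σ` while reading `w`. -/
def followRun {n d : ℕ} {Q : Type*} (A : Automaton Q) (σ : TransStrat n d A) (w : Word)
    (k : ℕ) : Trans Q :=
  σ.app ((List.range k).map w) (stateAt A σ w k) (w k)

/-- The transition strategy `σ` is winning for the set of words `L`. -/
def WinningFor {n d : ℕ} {Q : Type*} (A : Automaton Q) (σ : TransStrat n d A)
    (L : Set Word) : Prop :=
  ∀ w ∈ L, Accepting (followRun A σ w)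

/-- `A` is good for games: some transition strategy is winning for the whole `L(A)`. -/
def GFG (n d : ℕ) {Q : Type*} (A : Automaton Q) : Prop :=
  ∃ σ : TransStrat n d A, WinningFor A σ (Lang A)

/-- `A` is a parity-games separator. -/
def PGSeparator (n d : ℕ) {Q : Type*} (A : Automaton Q) : Prop :=
  (∀ w ∈ PosEven n d, w ∈ Lang A) ∧ ∀ w ∈ PosOdd n d, w ∉ Lang A

/-- `A` is a strong PG separator: additionally it rejects all of `LimsupOdd`. -/
def StrongPGSeparator (n d : ℕ) {Q : Type*} (A : Automaton Q) : Prop :=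
  PGSeparator n d A ∧ ∀ w : Word, LimsupOdd w → w ∉ Lang A

/-- `A` is suitable for parity games (SFPG). -/
def SFPG (n d : ℕ) {Q : Type*} (A : Automaton Q) : Prop :=
  PGSeparator n d A ∧
  ∀ (G : GameGraph n d) (τ : EPosStrat G), EWinningPos τ →
    ∃ σ : TransStrat n d A, WinningFor A σ {w | ArisesE τ w}

/-- A generic game with parity winning condition, over an arbitrary set of nodes. -/
structure PGame (V : Type*) where
  evenOwn : V → Prop
  start : V
  edges : Set (V × ℕ × V)

/-- A play of a generic game. -/
def PGame.IsPlay {V : Type*} (g : PGame V) (w : ℕ → V × ℕ × V) : Prop :=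
  (w 0).1 = g.start ∧ IsPathSeq g.edges w

/-- `IsFinPath E u l v`: the list of edges `l` is a finite path from `u` to `v`. -/
def IsFinPath {V : Type*} (E : Set (V × ℕ × V)) : V → List (V × ℕ × V) → V → Prop
  | u, [], v => u = v
  | u, e :: l, v => e ∈ E ∧ e.1 = u ∧ IsFinPath E e.2.2 l v

/-- Even has a winning strategy in the game `g`. -/
def EvenWins {V : Type*} (g : PGame V) : Prop :=
  ∃ str : List (V × ℕ × V) → V × ℕ × V,
    (∀ l v, IsFinPath g.edges g.start l v → g.evenOwn v →
      str l ∈ g.edges ∧ (str l).1 = v) ∧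
    ∀ w, g.IsPlay w → (∀ k, g.evenOwn ((w k).1) → w k = str ((List.range k).map w)) →
      MaxInfOftEven fun k => (w k).2.1

/-- Odd has a winning strategy in the game `g`. -/
def OddWins {V : Type*} (g : PGame V) : Prop :=
  ∃ str : List (V × ℕ × V) → V × ℕ × V,
    (∀ l v, IsFinPath g.edges g.start l v → ¬ g.evenOwn v →
      str l ∈ g.edges ∧ (str l).1 = v) ∧
    ∀ w, g.IsPlay w → (∀ k, ¬ g.evenOwn ((w k).1) → w k = str ((List.range k).map w)) →
      ¬ MaxInfOftEven fun k => (w k).2.1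

/-- Even has a strategy winning for the safety condition `safe` in the game `g`. -/
def EvenWinsSafety {V : Type*} (g : PGame V) (safe : V → Prop) : Prop :=
  ∃ str : List (V × ℕ × V) → V × ℕ × V,
    (∀ l v, IsFinPath g.edges g.start l v → g.evenOwn v →
      str l ∈ g.edges ∧ (str l).1 = v) ∧
    ∀ w, g.IsPlay w → (∀ k, g.evenOwn ((w k).1) → w k = str ((List.range k).map w)) →
      ∀ k, safe (w k).2.2

/-- A game graph viewed as a generic game. -/
def GameGraph.toPGame {n d : ℕ} (G : GameGraph n d) : PGame ℕ :=
  { evenOwn := fun v => v ∈ G.evenN, start := G.start, edges := G.edges }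

/-- The synchronized product `G × A`. -/
def prodGame {n d : ℕ} {Q : Type*} (G : GameGraph n d) (A : Automaton Q) :
    PGame ((ℕ ⊕ Letter) × Q) where
  evenOwn := fun x => match x.1 with
    | Sum.inl v => v ∈ G.evenN
    | Sum.inr _ => True
  start := (Sum.inl G.start, A.init)
  edges := {ed | (∃ e ∈ G.edges, ∃ s : Q, ed = ((Sum.inl e.1, s), 1, (Sum.inr e, s))) ∨
    (∃ t ∈ A.trans, tLetter t ∈ G.edges ∧
      ed = ((Sum.inr (tLetter t), tSrc t), tPrio t, (Sum.inl (tLetter t).2.2, tTgt t)))}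

/-- The number of registers: `rn(n) = 1 + ⌊log₂ n⌋`. -/
def rn (n : ℕ) : ℕ := 1 + Nat.log 2 n

/-- Update of a register state (bottom register first) by priority `p`:
the maximal prefix of registers smaller than `p` is replaced by `p`. -/
def update (p : ℕ) : List ℕ → List ℕ
  | [] => []
  | r :: l => if r < p then p :: update p l else r :: l

/-- The `k`-reset (registers numbered from 1, bottom first): the `k`-th register is
removed and a `1` is inserted at the bottom. -/
def resetReg (k : ℕ) (l : List ℕ) : List ℕ := 1 :: l.eraseIdx (k - 1)

/-- The value of register number `k` (registers numbered from 1, bottom first). -/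
def regVal (k : ℕ) (l : List ℕ) : ℕ := l.getD (k - 1) 0

/-- Lehtinen's register automaton `R_{n,d}`. -/
def Raut (n d : ℕ) : Automaton (List ℕ) where
  init := List.replicate (rn n) 1
  trans := {t | ∃ s e, InAlph n d e ∧
    (t = (s, e, 1, update (prio e) s) ∨
     ∃ k, 1 ≤ k ∧ k ≤ rn n ∧
       ((Even (regVal k (update (prio e) s)) ∧
           t = (s, e, 2 * k, resetReg k (update (prio e) s))) ∨
        (Odd (regVal k (update (prio e) s)) ∧
           t = (s, e, 2 * k + 1, resetReg k (update (prio e) s)))))}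

/-- States of the safety automaton `S_{n,d}`: `none` is the rejecting state `rej`;
otherwise a state of `R_{n,d}` together with a tuple of counters (bottom first:
`c_0` is the head). -/
abbrev SState : Type := Option (List ℕ × List ℕ)

/-- Counters `c_0,…,c_{k-1}` are reset to `c0`; the rest is kept. -/
def bumpKeep (c0 k : ℕ) (c : List ℕ) : List ℕ := List.replicate k c0 ++ c.drop k

/-- Counters `c_0,…,c_{k-1}` are reset to `c0`; counter `c_k` is decremented. -/
def bumpDec (c0 k : ℕ) (c : List ℕ) : List ℕ :=
  List.replicate k c0 ++ ((c.getD k 0 - 1) :: c.drop (k + 1))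

/-- The safety automaton `S_{n,d}`. -/
def Saut (n d : ℕ) : Automaton SState where
  init := some (List.replicate (rn n) 1, List.replicate (rn n + 1) n)
  trans := {t |
    (∃ e, InAlph n d e ∧ t = (none, e, 1, none)) ∨
    (∃ s c e k s', 1 ≤ k ∧ (s, e, 2 * k, s') ∈ (Raut n d).trans ∧
       t = (some (s, c), e, 2, some (s', bumpKeep n k c))) ∨
    (∃ s c e k s', (s, e, 2 * k + 1, s') ∈ (Raut n d).trans ∧
       ((1 < c.getD k 0 ∧ t = (some (s, c), e, 2, some (s', bumpDec n k c))) ∨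
        (c.getD k 0 = 1 ∧ t = (some (s, c), e, 1, none))))}

/-- `bad(ρ) ≤ B` for an infinite run `ρ`: every infix containing no transition of
priority above an odd `p` contains at most `B` transitions of priority `p`. -/
def badLE {Q : Type*} (ρ : ℕ → Trans Q) (B : ℕ) : Prop :=
  ∀ a b p, Odd p → (∀ i, a ≤ i → i < b → tPrio (ρ i) ≤ p) →
    ((Finset.Ico a b).filter fun i => tPrio (ρ i) = p).card ≤ B

/-- `bad(ρ) ≤ B` for a partial run of length `L` (possibly infinite). -/
def badLEPartial {Q : Type*} (ρ : ℕ → Trans Q) (L : ℕ∞) (B : ℕ) : Prop :=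
  ∀ (a b p : ℕ), Odd p → (b : ℕ∞) ≤ L → (∀ i, a ≤ i → i < b → tPrio (ρ i) ≤ p) →
    ((Finset.Ico a b).filter fun i => tPrio (ρ i) = p).card ≤ B

/-- The strategy subgraph `G_τ`: all outgoing edges of Odd's nodes, and only the
chosen edge from each of Even's nodes. -/
def GtauEdges {n d : ℕ} (G : GameGraph n d) (τ : EPosStrat G) : Set Letter :=
  {e | e ∈ G.edges ∧ (e.1 ∈ G.evenN → e = τ.choice e.1)}

/-- One step along an edge of `E`. -/
def StepRel (E : Set Letter) (u v : ℕ) : Prop := ∃ p, (u, p, v) ∈ E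

/-- Reachability along edges of `E`. -/
def Reach (E : Set Letter) : ℕ → ℕ → Prop := Relation.ReflTransGen (StepRel E)

/-- `V_τ`: the nodes of `G_τ` reachable from the starting node. -/
def Vtau {n d : ℕ} (G : GameGraph n d) (τ : EPosStrat G) : Set ℕ :=
  {v | Reach (GtauEdges G τ) G.start v}

/-- `G_{S,p}`: edges of `E` inside `S` of priority at most `p`. -/
def subEdges (E : Set Letter) (S : Set ℕ) (p : ℕ) : Set Letter :=
  {e | e ∈ E ∧ e.1 ∈ S ∧ e.2.2 ∈ S ∧ prio e ≤ p}

/-- `parts` lists the strongly connected components of the graph `(S, E)` in a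
topological order. -/
def IsSCCDecomp (E : Set Letter) (S : Set ℕ) (parts : List (Set ℕ)) : Prop :=
  (∀ P ∈ parts, P.Nonempty ∧ P ⊆ S) ∧
  (∀ v ∈ S, ∃ P ∈ parts, v ∈ P) ∧
  List.Pairwise Disjoint parts ∧
  (∀ P ∈ parts, ∀ u ∈ P, ∀ v ∈ S, ((Reach E u v ∧ Reach E v u) ↔ v ∈ P)) ∧
  (∀ (i j : ℕ) (hi : i < parts.length) (hj : j < parts.length), i < j →
    ∀ u ∈ parts.get ⟨j, hj⟩, ∀ v ∈ parts.get ⟨i, hi⟩, ¬ StepRel E u v)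

/-- The nodes of a tree given by the children function `ch` with root `(r, R)`. -/
inductive TreeNode (ch : ℕ → Set ℕ → List (Set ℕ)) (r : ℕ) (R : Set ℕ) :
    ℕ → Set ℕ → Prop where
  | root : TreeNode ch r R r R
  | child {k : ℕ} {S T : Set ℕ} : TreeNode ch r R (k + 1) S → T ∈ ch (k + 1) S →
      TreeNode ch r R k T

/-- `ch` describes a game tree of `G_τ`: the root is `(⌈d/2⌉, V_τ)`, and the children
of a node `(k+1, S)` are the SCCs of `G_{S,2(k+1)-1}` in topological order. -/
def IsGameTree {n d : ℕ} (G : GameGraph n d) (τ : EPosStrat G)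
    (ch : ℕ → Set ℕ → List (Set ℕ)) : Prop :=
  ∀ k S, TreeNode ch ((d + 1) / 2) (Vtau G τ) (k + 1) S →
    IsSCCDecomp (subEdges (GtauEdges G τ) S (2 * (k + 1) - 1)) S (ch (k + 1) S)

/-- `fstl ch l k S`: the leftmost descendant of the node `(k, S)` on level `l`
(for `l ≤ k`). -/
def fstl (ch : ℕ → Set ℕ → List (Set ℕ)) (l : ℕ) : ℕ → Set ℕ → Set ℕ
  | 0, S => S
  | k + 1, S => if l = k + 1 then S else fstl ch l k ((ch (k + 1) S).headD ∅)


/-! ### Auxiliary machinery for Statement 14 -/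

lemma finpath_mem {V : Type*} {E : Set (V × ℕ × V)} :
    ∀ {l : List (V × ℕ × V)} {u v}, IsFinPath E u l v → ∀ e ∈ l, e ∈ E := by
  intro l
  induction l with
  | nil => intro u v _ e he; simp at he
  | cons a t ih =>
    intro u v h e he
    rcases h with ⟨ha, _, ht⟩
    rcases List.mem_cons.1 he with rfl | he
    · exact ha
    · exact ih ht e he

lemma finpath_append {V : Type*} {E : Set (V × ℕ × V)} :
    ∀ {l : List (V × ℕ × V)} {l' u v w},
      IsFinPath E u l v → IsFinPath E v l' w → IsFinPath E u (l ++ l') w := by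
  intro l
  induction l with
  | nil => intro l' u v w h h'; cases h; simpa using h'
  | cons a t ih =>
    intro l' u v w h h'
    rcases h with ⟨ha, hau, ht⟩
    exact ⟨ha, hau, ih ht h'⟩

lemma finpath_mono {V : Type*} {E E' : Set (V × ℕ × V)} (hE : E ⊆ E') :
    ∀ {l : List (V × ℕ × V)} {u v}, IsFinPath E u l v → IsFinPath E' u l v := by
  intro l
  induction l with
  | nil => intro u v h; exact h
  | cons a t ih => intro u v h; exact ⟨hE h.1, h.2.1, ih h.2.2⟩

lemma reach_finpath {E : Set Letter} {a b : ℕ} (h : Reach E a b) :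
    ∃ L, IsFinPath E a L b := by
  induction h with
  | refl => exact ⟨[], rfl⟩
  | tail _ hs ih =>
    rcases ih with ⟨L, hL⟩
    rcases hs with ⟨p, hp⟩
    exact ⟨L ++ [(_, p, _)], finpath_append hL ⟨hp, rfl, rfl⟩⟩

/-- The auxiliary sequence of "remaining edge lists": start with `L ++ c`,
step to the tail, looping back to `c` when exhausted. -/
def auxSeq (L c : List Letter) : ℕ → List Letter
  | 0 => L ++ c
  | k + 1 => if (auxSeq L c k).tail = [] then c else (auxSeq L c k).tail

/-- The infinite word looping around the cycle `c` after the prefix `L`. -/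
def wSeq (L c : List Letter) (k : ℕ) : Letter := (auxSeq L c k).headD default

section LoopWord

variable {E : Set Letter} {s u : ℕ} {L c : List Letter}

lemma auxSeq_invariant (hc : IsFinPath E u c u) (hcne : c ≠ [])
    (hL : IsFinPath E s L u) :
    ∀ k, auxSeq L c k ≠ [] ∧ IsFinPath E (wSeq L c k).1 (auxSeq L c k) u := by
  have hcpath : IsFinPath E ((c.headD default).1) c u := by
    cases c with
    | nil => exact absurd rfl hcne
    | cons a t => exact ⟨hc.1, rfl, hc.2.2⟩
  intro k
  induction k with
  | zero =>
    constructor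
    · show L ++ c ≠ []
      intro h
      exact hcne (List.append_eq_nil_iff.1 h).2
    · have h := finpath_append hL hc
      show IsFinPath E ((L ++ c).headD default).1 (L ++ c) u
      cases hLC : L ++ c with
      | nil => exact absurd (List.append_eq_nil_iff.1 hLC).2 hcne
      | cons a t =>
        rw [hLC] at h
        exact ⟨h.1, rfl, h.2.2⟩
  | succ k ih =>
    rcases ih with ⟨hne, hpath⟩
    cases hak : auxSeq L c k with
    | nil => exact absurd hak hne
    | cons a t =>
      rw [hak] at hpath
      rcases hpath with ⟨_, _, htail⟩
      by_cases ht : t = []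
      · subst ht
        have h1 : auxSeq L c (k + 1) = c := by simp [auxSeq, hak]
        refine ⟨by rw [h1]; exact hcne, ?_⟩
        rw [wSeq, h1]; exact hcpath
      · have h1 : auxSeq L c (k + 1) = t := by simp [auxSeq, hak, ht]
        refine ⟨by rw [h1]; exact ht, ?_⟩
        rw [wSeq, h1]
        cases t with
        | nil => exact absurd rfl ht
        | cons b t' => exact ⟨htail.1, rfl, htail.2.2⟩

lemma wSeq_pathSeq (hc : IsFinPath E u c u) (hcne : c ≠ [])
    (hL : IsFinPath E s L u) :
    ∀ k, wSeq L c k ∈ E ∧ (wSeq L c k).2.2 = (wSeq L c (k + 1)).1 := by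
  have hinv := auxSeq_invariant hc hcne hL
  intro k
  rcases hinv k with ⟨hne, hpath⟩
  rcases hinv (k + 1) with ⟨hne', hpath'⟩
  cases hak : auxSeq L c k with
  | nil => exact absurd hak hne
  | cons a t =>
    rw [hak] at hpath
    have hwk : wSeq L c k = a := by rw [wSeq, hak]; rfl
    refine ⟨by rw [hwk]; exact hpath.1, ?_⟩
    by_cases ht : t = []
    · subst ht
      have h1 : auxSeq L c (k + 1) = c := by simp [auxSeq, hak]
      have hau : a.2.2 = u := hpath.2.2
      rw [hwk, hau]
      rw [wSeq, h1]
      cases c with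
      | nil => exact absurd rfl hcne
      | cons b t' => exact (hc.2.1).symm
    · have h1 : auxSeq L c (k + 1) = t := by simp [auxSeq, hak, ht]
      rw [hwk, wSeq, h1]
      cases t with
      | nil => exact absurd rfl ht
      | cons b t' => exact (hpath.2.2.2.1).symm

lemma wSeq_zero_src (hc : IsFinPath E u c u) (hcne : c ≠ [])
    (hL : IsFinPath E s L u) : (wSeq L c 0).1 = s := by
  have h := finpath_append hL hc
  cases hLC : L ++ c with
  | nil => exact absurd (List.append_eq_nil_iff.1 hLC).2 hcne
  | cons a t =>
    rw [hLC] at h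
    show ((auxSeq L c 0).headD default).1 = s
    show (((L ++ c)).headD default).1 = s
    rw [hLC]
    exact h.2.1

lemma auxSeq_eventually_c (hcne : c ≠ []) (hinv : ∀ k, auxSeq L c k ≠ []) :
    ∀ k, ∃ m, k ≤ m ∧ auxSeq L c m = c := by
  have key : ∀ j k, (auxSeq L c k).length ≤ j → ∃ m, k ≤ m ∧ auxSeq L c m = c := by
    intro j
    induction j with
    | zero =>
      intro k hk
      exact absurd (List.length_eq_zero_iff.1 (Nat.le_zero.1 hk)) (hinv k)
    | succ j ih =>
      intro k hk
      by_cases ht : (auxSeq L c k).tail = []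
      · exact ⟨k + 1, Nat.le_succ k, by simp [auxSeq, ht]⟩
      · have h1 : auxSeq L c (k + 1) = (auxSeq L c k).tail := by simp [auxSeq, ht]
        have h2 : (auxSeq L c (k + 1)).length ≤ j := by
          rw [h1, List.length_tail]
          omega
        rcases ih (k + 1) h2 with ⟨m, hm, hmc⟩
        exact ⟨m, le_trans (Nat.le_succ k) hm, hmc⟩
  intro k
  exact key (auxSeq L c k).length k le_rfl

lemma auxSeq_suffix_of_c {m : ℕ} (hm : auxSeq L c m = c) :
    ∀ k, m ≤ k → auxSeq L c k <:+ c := by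
  intro k hk
  induction k with
  | zero =>
    have : m = 0 := Nat.le_zero.1 hk
    rw [this] at hm; rw [hm]
  | succ k ih =>
    rcases Nat.lt_or_ge m (k + 1) with h | h
    · have hs := ih (Nat.lt_succ_iff.1 h)
      by_cases ht : (auxSeq L c k).tail = []
      · simp [auxSeq, ht]
      · have h1 : auxSeq L c (k + 1) = (auxSeq L c k).tail := by simp [auxSeq, ht]
        rw [h1]
        exact (List.tail_suffix _).trans hs
    · have : m = k + 1 := le_antisymm hk h
      rw [this] at hm; rw [hm]

lemma wSeq_mem_of_nonempty {k : ℕ} (hne : auxSeq L c k ≠ []) :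
    wSeq L c k ∈ auxSeq L c k := by
  cases hak : auxSeq L c k with
  | nil => exact absurd hak hne
  | cons a t => rw [wSeq, hak]; exact List.mem_cons_self

lemma wSeq_hits {e : Letter} :
    ∀ (c' : List Letter) (m : ℕ), e ∈ c' → auxSeq L c m = c' →
      ∃ k, m ≤ k ∧ wSeq L c k = e := by
  intro c'
  induction c' with
  | nil => intro m he; simp at he
  | cons a t ih =>
    intro m he hm
    rcases List.mem_cons.1 he with rfl | he
    · exact ⟨m, le_rfl, by rw [wSeq, hm]; rfl⟩
    · have ht : t ≠ [] := by rintro rfl; simp at he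
      have h1 : auxSeq L c (m + 1) = t := by simp [auxSeq, hm, ht]
      rcases ih (m + 1) he h1 with ⟨k, hk, hke⟩
      exact ⟨k, le_trans (Nat.le_succ m) hk, hke⟩

end LoopWord

lemma foldr_max_le {l : List ℕ} : ∀ x ∈ l, x ≤ l.foldr max 0 := by
  induction l with
  | nil => simp
  | cons a t ih =>
    intro x hx
    rcases List.mem_cons.1 hx with rfl | hx
    · exact le_max_left _ _
    · exact le_trans (ih x hx) (le_max_right _ _)

lemma foldr_max_mem {l : List ℕ} (h : l ≠ []) : l.foldr max 0 ∈ l := by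
  induction l with
  | nil => exact absurd rfl h
  | cons a t ih =>
    by_cases ht : t = []
    · subst ht; simp
    · rcases max_cases a (t.foldr max 0) with ⟨he, _⟩ | ⟨he, _⟩
      · simp [he]
      · simp only [List.foldr_cons, he]
        exact List.mem_cons_of_mem _ (ih ht)

/-- Key lemma: every cycle of `G_τ` reachable from the start has even maximal
priority. -/
lemma cycle_max_even {n d : ℕ} {G : GameGraph n d} {τ : EPosStrat G}
    (hτ : EWinningPos τ) (v : ℕ) (l : List Letter) (hne : l ≠ [])
    (hcyc : IsFinPath (GtauEdges G τ) v l v) (hv : v ∈ Vtau G τ) :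
    ∃ p, Even p ∧ (∃ e ∈ l, prio e = p) ∧ ∀ e ∈ l, prio e ≤ p := by
  rcases reach_finpath hv with ⟨L, hL⟩
  set w := wSeq L l with hw
  have hinv := auxSeq_invariant hcyc hne hL
  have hinv' : ∀ k, auxSeq L l k ≠ [] := fun k => (hinv k).1
  have hstep := wSeq_pathSeq hcyc hne hL
  -- every letter of w lies in GtauEdges
  have hwE : ∀ k, w k ∈ GtauEdges G τ := fun k => (hstep k).1
  -- w arises from τ
  have harise : ArisesE τ w := by
    refine ⟨⟨wSeq_zero_src hcyc hne hL, fun k => ⟨(hwE k).1, (hstep k).2⟩⟩, ?_⟩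
    intro k hk
    exact (hwE k).2 hk
  have hwin := hτ w harise
  rcases hwin with ⟨p, hpe, hpio, hpmax⟩
  set p0 := (l.map prio).foldr max 0 with hp0
  -- p0 is attained in l
  have hp0mem : ∃ e ∈ l, prio e = p0 := by
    have := foldr_max_mem (l := l.map prio) (by simpa using hne)
    rcases List.mem_map.1 this with ⟨e, he, hee⟩
    exact ⟨e, he, hee⟩
  have hp0le : ∀ e ∈ l, prio e ≤ p0 :=
    fun e he => foldr_max_le _ (List.mem_map_of_mem (f := prio) he)
  -- eventually the word reads only letters of l
  rcases auxSeq_eventually_c hne hinv' 0 with ⟨m0, _, hm0⟩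
  have htailmem : ∀ k, m0 ≤ k → w k ∈ l := by
    intro k hk
    have hsuf := auxSeq_suffix_of_c hm0 k hk
    exact hsuf.subset (wSeq_mem_of_nonempty (hinv' k))
  -- p0 occurs infinitely often
  have hIO : InfOft (fun k => prio (w k)) p0 := by
    intro N
    rcases hp0mem with ⟨e, he, hee⟩
    rcases auxSeq_eventually_c hne hinv' N with ⟨m, hm, hmc⟩
    rcases wSeq_hits l m he hmc with ⟨k, hk, hke⟩
    refine ⟨k, le_trans hm hk, ?_⟩
    show prio (w k) = p0
    rw [show w k = e from hke]
    exact hee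
  -- p ≤ p0
  have hple : p ≤ p0 := by
    rcases hpio m0 with ⟨k, hk, hkp⟩
    have h1 : prio (w k) = p := hkp
    have h2 : prio (w k) ≤ p0 := hp0le _ (htailmem k hk)
    omega
  have hp0p : p0 ≤ p := hpmax p0 hIO
  have : p0 = p := le_antisymm hp0p hple
  exact ⟨p0, this ▸ hpe, hp0mem, hp0le⟩

/-- Every cycle of the strategy subgraph `G_τ` of a positional
winning strategy `τ` for Even, all of whose nodes lie in `V_τ`, has even maximal
edge priority; in particular, within every strongly connected subset of `V_τ`, no
edge of maximal priority has odd priority. -/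
theorem strategy_subgraph_cycles_even (n d : ℕ) (hn : 1 ≤ n) (hd : 1 ≤ d)
    (G : GameGraph n d) (τ : EPosStrat G) (hτ : EWinningPos τ) :
    (∀ (v : ℕ) (l : List Letter), l ≠ [] → IsFinPath (GtauEdges G τ) v l v →
      v ∈ Vtau G τ → (∀ e ∈ l, e.1 ∈ Vtau G τ) →
      ∃ p, Even p ∧ (∃ e ∈ l, prio e = p) ∧ ∀ e ∈ l, prio e ≤ p) ∧
    (∀ S : Set ℕ, S ⊆ Vtau G τ →
      (∀ u ∈ S, ∀ v ∈ S, Reach (subEdges (GtauEdges G τ) S d) u v) →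
      ∀ e ∈ subEdges (GtauEdges G τ) S d,
        (∀ e' ∈ subEdges (GtauEdges G τ) S d, prio e' ≤ prio e) →
        ¬ Odd (prio e)) := by
  have key := fun v l hne hcyc hv => cycle_max_even hτ v l hne hcyc hv
  constructor
  · intro v l hne hcyc hv _
    exact key v l hne hcyc hv
  · intro S hS hconn e he hmax hodd
    obtain ⟨heG, heS1, heS2, _⟩ := he
    rcases reach_finpath (hconn _ heS2 _ heS1) with ⟨L1, hL1⟩
    have hsub : subEdges (GtauEdges G τ) S d ⊆ GtauEdges G τ := fun x hx => hx.1
    have hcyc : IsFinPath (GtauEdges G τ) e.1 (e :: L1) e.1 :=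
      ⟨heG, rfl, finpath_mono hsub hL1⟩
    rcases key e.1 (e :: L1) (by simp) hcyc (hS heS1) with ⟨p, hpe, ⟨e'', he'', hpeq⟩, hple⟩
    have h1 : prio e ≤ p := hple e List.mem_cons_self
    have h2 : p ≤ prio e := by
      rcases List.mem_cons.1 he'' with rfl | he''
      · omega
      · have := hmax e'' (finpath_mem hL1 e'' he'')
        omega
    have : p = prio e := le_antisymm h2 h1
    rw [this] at hpe
    exact (Nat.not_odd_iff_even.2 hpe) hodd

end PGSep
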